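/- Let Δ be a probabilistic one-counter automaton with control states Q, |Q| = k. For all control states p, q and all m, n ∈ ℕ: if dist(pXᵐZ) = dist(qXⁿZ) = ∞, then pXᵐZ ∼ qXⁿZ if and only if pXᵐZ ∼_k qXⁿZ. -/

import Mathlib

open scoped ENNReal

noncomputable section

/-- A probabilistic labelled transition system (pLTS): states `S`, alphabet `A`,
and a transition relation into probability distributions (`PMF`s) on `S`. -/
structure PLTS (S : Type) (A : Type) where
  Tr : S → A → PMF S → Prop

namespace PLTS

variable {S A : Type}

/-- The mass that a distribution assigns to a set of states. -/
def mass (d : PMF S) (E : Set S) : ℝ≥0∞ := ∑' s : E, d s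

/-- Two distributions are `r`-equivalent if they assign equal mass to every
`r`-equivalence class (for an equivalence `r`, the classes are the sets `{t | r s t}`). -/
def REquiv (r : S → S → Prop) (d d' : PMF S) : Prop :=
  ∀ s : S, mass d {t | r s t} = mass d' {t | r s t}

/-- An equivalence relation is a bisimulation if related states can match
each other's transitions with `r`-equivalent target distributions. -/
def IsBisimulation (L : PLTS S A) (r : S → S → Prop) : Prop :=
  Equivalence r ∧
    ∀ s t, r s t → ∀ a d, L.Tr s a d → ∃ d', L.Tr t a d' ∧ REquiv r d d'

/-- Bisimilarity: the union of all bisimulation relations. -/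
def Bisim (L : PLTS S A) (s t : S) : Prop :=
  ∃ r, L.IsBisimulation r ∧ r s t

/-- The bisimulation approximants `∼ₙ`. -/
def approx (L : PLTS S A) : ℕ → S → S → Prop
  | 0 => fun _ _ => True
  | n + 1 => fun s t =>
      (∀ a d, L.Tr s a d → ∃ d', L.Tr t a d' ∧ REquiv (L.approx n) d d') ∧
      (∀ a d', L.Tr t a d' → ∃ d, L.Tr s a d ∧ REquiv (L.approx n) d d')

/-- A pLTS is finitely branching if every state has finitely many transitions. -/
def FinBranching (L : PLTS S A) : Prop :=
  ∀ s, {p : A × PMF S | L.Tr s p.1 p.2}.Finite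

/-- One-step successor relation: `s → s'` iff some transition of `s` gives `s'`
positive probability. -/
def Step (L : PLTS S A) (s s' : S) : Prop :=
  ∃ a d, L.Tr s a d ∧ d s' ≠ 0

end PLTS

/-- The rules of a probabilistic pushdown automaton (pPDA) with control states
`Q`, stack alphabet `Γ`, input alphabet `A`: a rule `qX –a↪ d` is a tuple
`(q, X, a, d)` where `d` is a distribution over pairs of a control state and
a string of length at most two that replaces the top symbol. -/
def PPDARules (Q Γ A : Type) := Q → Γ → A → PMF (Q × List Γ) → Prop

/-- Well-formedness of pPDA rules: target distributions are supported on
configurations `(p, α)` with `|α| ≤ 2` (i.e. `α ∈ Γ^{≤2}`). -/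
def PPDAWf {Q Γ A : Type} (Δ : PPDARules Q Γ A) : Prop :=
  ∀ q X a d, Δ q X a d → ∀ p (α : List Γ), d (p, α) ≠ 0 → α.length ≤ 2

/-- A nondeterministic PDA is a pPDA all of whose rules use Dirac distributions. -/
def IsPDA {Q Γ A : Type} (Δ : PPDARules Q Γ A) : Prop :=
  ∀ q X a d, Δ q X a d → ∃ c, d = PMF.pure c

/-- The pLTS induced by a pPDA on configurations `Q × Γ*`: a rule `qX –a↪ d`
and a tail `β ∈ Γ*` induce the transition `qXβ –a→ d'` with `d'(pαβ) = d(pα)`;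
configurations with empty stack have no transitions. -/
def PPDARules.plts {Q Γ A : Type} (Δ : PPDARules Q Γ A) : PLTS (Q × List Γ) A where
  Tr := fun c a d' => ∃ (q : Q) (X : Γ) (β : List Γ) (d : PMF (Q × List Γ)),
    c = (q, X :: β) ∧ Δ q X a d ∧ d' = d.map (fun pα => (pα.1, pα.2 ++ β))

/-- The stack alphabet `{X, Z}` of a one-counter automaton. -/
inductive OCSym : Type
  | X : OCSym
  | Z : OCSym
deriving DecidableEq

/-- Well-formedness of pOCA rules: `Z` always and only occurs at the bottom of
the stack, i.e. rules for top `X` rewrite `X` into `ε`, `X` or `XX`, and rules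
for top `Z` rewrite `Z` into `Z` or `XZ`. -/
def POCAWf {Q A : Type} (Δ : PPDARules Q OCSym A) : Prop :=
  (∀ q a d, Δ q OCSym.X a d → ∀ p (α : List OCSym), d (p, α) ≠ 0 →
      α = [] ∨ α = [OCSym.X] ∨ α = [OCSym.X, OCSym.X]) ∧
  (∀ q a d, Δ q OCSym.Z a d → ∀ p (α : List OCSym), d (p, α) ≠ 0 →
      α = [OCSym.Z] ∨ α = [OCSym.X, OCSym.Z])

/-- The configuration `pXᵐZ` of a pOCA. -/
def oconf {Q : Type} (p : Q) (m : ℕ) : Q × List OCSym :=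
  (p, List.replicate m OCSym.X ++ [OCSym.Z])

/-- The finite pLTS `ℱ_Δ` underlying a pOCA: `p –a→ d'` iff there is a rule
`pX –a↪ d` with `d'(q) = d(q,ε) + d(q,X) + d(q,XX)` for all `q`. -/
def underlying {Q A : Type} (Δ : PPDARules Q OCSym A) : PLTS Q A where
  Tr := fun p a d' => ∃ d, Δ p OCSym.X a d ∧
    ∀ q : Q, d' q = d (q, []) + d (q, [OCSym.X]) + d (q, [OCSym.X, OCSym.X])

/-- The disjoint-union pLTS of two pLTSs over the same alphabet. -/
def PLTS.sum {S₁ S₂ A : Type} (L₁ : PLTS S₁ A) (L₂ : PLTS S₂ A) :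
    PLTS (S₁ ⊕ S₂) A where
  Tr := fun s a d =>
    (∃ s₁ d₁, s = Sum.inl s₁ ∧ L₁.Tr s₁ a d₁ ∧ d = d₁.map Sum.inl) ∨
    (∃ s₂ d₂, s = Sum.inr s₂ ∧ L₂.Tr s₂ a d₂ ∧ d = d₂.map Sum.inr)

/-- `INC`: configurations `pXᵐZ` that are not related by the `k`-th
approximant (`k = |Q|`) to any state `q` of the underlying finite pLTS, in the
disjoint union of `S(Δ)` and `ℱ_Δ`. -/
def InINC {Q A : Type} [Fintype Q] (Δ : PPDARules Q OCSym A)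
    (p : Q) (m : ℕ) : Prop :=
  ∀ q : Q, ¬ (Δ.plts.sum (underlying Δ)).approx (Fintype.card Q)
      (Sum.inl (oconf p m)) (Sum.inr q)

/-- `ℓ` one-step successor moves lead from `s` to `t`. -/
def PLTS.StepN {S A : Type} (L : PLTS S A) : ℕ → S → S → Prop
  | 0, s, t => s = t
  | n + 1, s, t => ∃ u, L.Step s u ∧ L.StepN n u t

/-- `dist(c)`: the least number of one-step successor moves in `S(Δ)` leading
from the configuration `c` to some configuration in `INC` (and `∞ = ⊤` if
`INC` is unreachable). -/
def distINC {Q A : Type} [Fintype Q] (Δ : PPDARules Q OCSym A)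
    (c : Q × List OCSym) : ℕ∞ :=
  sInf {n : ℕ∞ | ∃ ℓ : ℕ, n = (ℓ : ℕ∞) ∧
    ∃ (p : Q) (m : ℕ), Δ.plts.StepN ℓ c (oconf p m) ∧ InINC Δ p m}
section MassLemmas

variable {S T A : Type}

lemma mass_def (d : PMF S) (C : Set S) :
    PLTS.mass d C = ∑' s, C.indicator (fun s => d s) s :=
  tsum_subtype C _

lemma mass_empty (d : PMF S) : PLTS.mass d (∅ : Set S) = 0 := by
  simp [PLTS.mass]

lemma mass_singleton (d : PMF S) (x : S) : PLTS.mass d {x} = d x :=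
  tsum_singleton x _

lemma mass_congr (d : PMF S) {C C' : Set S}
    (h : ∀ s, d s ≠ 0 → (s ∈ C ↔ s ∈ C')) :
    PLTS.mass d C = PLTS.mass d C' := by
  rw [mass_def, mass_def]
  classical
  refine tsum_congr fun s => ?_
  by_cases hd : d s = 0
  · by_cases h1 : s ∈ C <;> by_cases h2 : s ∈ C' <;>
      simp [Set.indicator, h1, h2, hd]
  · by_cases h1 : s ∈ C
    · simp [Set.indicator, h1, (h s hd).mp h1]
    · have h2 : s ∉ C' := fun h2 => h1 ((h s hd).mpr h2)
      simp [Set.indicator, h1, h2]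

lemma mass_map (f : S → T) (d : PMF S) (C : Set T) :
    PLTS.mass (d.map f) C = PLTS.mass d (f ⁻¹' C) := by
  classical
  rw [mass_def, mass_def]
  have key : ∀ t, C.indicator (fun t => (d.map f) t) t
      = ∑' a, C.indicator (fun t => if t = f a then d a else 0) t := by
    intro t
    by_cases ht : t ∈ C
    · simp only [Set.indicator_of_mem ht, PMF.map_apply]
    · simp [Set.indicator_of_notMem ht]
  rw [tsum_congr key, ENNReal.tsum_comm]
  refine tsum_congr fun a => ?_
  rw [tsum_eq_single (f a) (by
    intro t htne
    by_cases ht : t ∈ C <;> simp [Set.indicator, ht, htne])]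
  by_cases hfa : f a ∈ C <;> simp [Set.indicator, hfa]

/-- If `C` is saturated w.r.t. an equivalence `r` and `d, d'` assign equal
mass to every `r`-class, then they assign equal mass to `C`. -/
lemma mass_saturated (r : S → S → Prop) (hr : Equivalence r) {C : Set S}
    (hC : ∀ ⦃s t⦄, r s t → s ∈ C → t ∈ C) {d d' : PMF S}
    (h : PLTS.REquiv r d d') :
    PLTS.mass d C = PLTS.mass d' C := by
  set st : Setoid S := ⟨r, hr⟩ with hst
  have key : ∀ (e : PMF S), PLTS.mass e C
      = ∑' q : Quotient st, ∑' x : {x // Quotient.mk st x = q},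
          C.indicator (fun s => e s) x.1 := by
    intro e
    rw [mass_def, ← Equiv.tsum_eq (Equiv.sigmaFiberEquiv (Quotient.mk st))
      (fun s => C.indicator (fun s => e s) s)]
    rw [show (fun c => C.indicator (fun s => (e : S → ℝ≥0∞) s)
        ((Equiv.sigmaFiberEquiv (Quotient.mk st)) c))
      = (fun c : (y : Quotient st) × {x // Quotient.mk st x = y} =>
          C.indicator (fun s => (e : S → ℝ≥0∞) s) c.2.1) from rfl]
    exact ENNReal.tsum_sigma (fun q (x : {x // Quotient.mk st x = q}) =>
      C.indicator (fun s => (e : S → ℝ≥0∞) s) x.1)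
  rw [key d, key d']
  refine tsum_congr fun q => ?_
  induction q using Quotient.ind with
  | _ t₀ =>
  have hfiber : ∀ x : S, (Quotient.mk st x = Quotient.mk st t₀) ↔ r t₀ x := by
    intro x
    rw [Quotient.eq]
    exact ⟨fun h' => hr.symm h', fun h' => hr.symm h'⟩
  by_cases ht₀ : t₀ ∈ C
  · have hmem : ∀ x : {x // Quotient.mk st x = Quotient.mk st t₀}, x.1 ∈ C :=
      fun x => hC ((hfiber x.1).mp x.2) ht₀
    have conv : ∀ (e : PMF S),
        ∑' x : {x // Quotient.mk st x = Quotient.mk st t₀},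
          C.indicator (fun s => e s) x.1 = PLTS.mass e {t | r t₀ t} := by
      intro e
      have : ∀ x : {x // Quotient.mk st x = Quotient.mk st t₀},
          C.indicator (fun s => e s) x.1 = e x.1 :=
        fun x => Set.indicator_of_mem (hmem x) _
      rw [tsum_congr this]
      have hsets : {x : S | Quotient.mk st x = Quotient.mk st t₀} = {t | r t₀ t} := by
        ext x; exact hfiber x
      calc ∑' x : {x // Quotient.mk st x = Quotient.mk st t₀}, e x.1
          = ∑' x : {x : S | Quotient.mk st x = Quotient.mk st t₀}, e x.1 := rfl
        _ = PLTS.mass e {t | r t₀ t} := by rw [hsets]; rfl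
    rw [conv d, conv d']
    exact h t₀
  · have hzero : ∀ (e : PMF S) (x : {x // Quotient.mk st x = Quotient.mk st t₀}),
        C.indicator (fun s => e s) x.1 = 0 := by
      intro e x
      refine Set.indicator_of_notMem (fun hx => ht₀ ?_) _
      exact hC (hr.symm ((hfiber x.1).mp x.2)) hx
    rw [tsum_congr (hzero d), tsum_congr (hzero d')]

end MassLemmas
section ApproxLemmas

variable {S A : Type} (L : PLTS S A)

lemma rEquiv_refl (r : S → S → Prop) (d : PMF S) : PLTS.REquiv r d d :=
  fun _ => rfl

lemma rEquiv_symm {r : S → S → Prop} {d d' : PMF S}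
    (h : PLTS.REquiv r d d') : PLTS.REquiv r d' d := fun s => (h s).symm

lemma rEquiv_trans {r : S → S → Prop} {d d' d'' : PMF S}
    (h : PLTS.REquiv r d d') (h' : PLTS.REquiv r d' d'') :
    PLTS.REquiv r d d'' := fun s => (h s).trans (h' s)

lemma rEquiv_mono {r r' : S → S → Prop} (hr : Equivalence r)
    (hr' : ∀ ⦃a b c⦄, r' a b → r' b c → r' a c)
    (hsub : ∀ ⦃a b⦄, r a b → r' a b) {d d' : PMF S}
    (h : PLTS.REquiv r d d') : PLTS.REquiv r' d d' := by
  intro s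
  exact mass_saturated r hr (C := {t | r' s t})
    (fun u t hut hu => hr' hu (hsub hut)) h

lemma approx_zero (s t : S) : L.approx 0 s t := trivial

lemma approx_succ_iff (n : ℕ) (s t : S) : L.approx (n+1) s t ↔
    (∀ a d, L.Tr s a d → ∃ d', L.Tr t a d' ∧ PLTS.REquiv (L.approx n) d d') ∧
    (∀ a d', L.Tr t a d' → ∃ d, L.Tr s a d ∧ PLTS.REquiv (L.approx n) d d') :=
  Iff.rfl

lemma approx_refl (n : ℕ) (s : S) : L.approx n s s := by
  cases n with
  | zero => trivial
  | succ n => exact ⟨fun a d h => ⟨d, h, rEquiv_refl _ _⟩,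
      fun a d h => ⟨d, h, rEquiv_refl _ _⟩⟩

lemma approx_symm {n : ℕ} {s t : S} (h : L.approx n s t) : L.approx n t s := by
  cases n with
  | zero => trivial
  | succ n =>
    exact ⟨fun a d hd => (h.2 a d hd).imp (fun d' hd' => ⟨hd'.1, rEquiv_symm hd'.2⟩),
      fun a d hd => (h.1 a d hd).imp (fun d' hd' => ⟨hd'.1, rEquiv_symm hd'.2⟩)⟩

lemma approx_trans {n : ℕ} {s t u : S} (h : L.approx n s t)
    (h' : L.approx n t u) : L.approx n s u := by
  cases n with
  | zero => trivial
  | succ n =>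
    constructor
    · intro a d hd
      obtain ⟨d', hd', e⟩ := h.1 a d hd
      obtain ⟨d'', hd'', e'⟩ := h'.1 a d' hd'
      exact ⟨d'', hd'', rEquiv_trans e e'⟩
    · intro a d hd
      obtain ⟨d', hd', e⟩ := h'.2 a d hd
      obtain ⟨d'', hd'', e'⟩ := h.2 a d' hd'
      exact ⟨d'', hd'', rEquiv_trans e' e⟩

lemma approx_equivalence (n : ℕ) : Equivalence (L.approx n) :=
  ⟨approx_refl L n, approx_symm L, approx_trans L⟩

lemma approx_antitone_succ : ∀ (n : ℕ) {s t : S},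
    L.approx (n+1) s t → L.approx n s t := by
  intro n
  induction n with
  | zero => exact fun _ => trivial
  | succ n ih =>
    intro s t h
    constructor
    · intro a d hd
      obtain ⟨d', hd', e⟩ := h.1 a d hd
      exact ⟨d', hd', rEquiv_mono (r' := L.approx n) (approx_equivalence L (n+1))
        (fun _ _ _ h1 h2 => approx_trans L h1 h2) (fun _ _ h1 => ih h1) e⟩
    · intro a d hd
      obtain ⟨d', hd', e⟩ := h.2 a d hd
      exact ⟨d', hd', rEquiv_mono (r' := L.approx n) (approx_equivalence L (n+1))
        (fun _ _ _ h1 h2 => approx_trans L h1 h2) (fun _ _ h1 => ih h1) e⟩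

lemma approx_le {m n : ℕ} (hmn : m ≤ n) {s t : S}
    (h : L.approx n s t) : L.approx m s t := by
  induction n with
  | zero => exact (Nat.le_zero.mp hmn) ▸ h
  | succ n ih =>
    rcases Nat.lt_or_ge m (n+1) with hm | hm
    · exact ih (Nat.lt_succ_iff.mp hm) (approx_antitone_succ L n h)
    · exact (le_antisymm hmn hm) ▸ h

lemma isBisimulation_approx {r : S → S → Prop} (hb : L.IsBisimulation r) :
    ∀ (n : ℕ) {s t : S}, r s t → L.approx n s t := by
  intro n
  induction n with
  | zero => exact fun _ => trivial
  | succ n ih =>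
    intro s t hst
    constructor
    · intro a d hd
      obtain ⟨d', hd', e⟩ := hb.2 s t hst a d hd
      exact ⟨d', hd', rEquiv_mono (r' := L.approx n) hb.1 (fun _ _ _ h1 h2 => approx_trans L h1 h2)
        (fun _ _ h1 => ih h1) e⟩
    · intro a d hd
      obtain ⟨d', hd', e⟩ := hb.2 t s (hb.1.symm hst) a d hd
      exact ⟨d', hd', rEquiv_symm (rEquiv_mono (r' := L.approx n) hb.1 (fun _ _ _ h1 h2 => approx_trans L h1 h2)
        (fun _ _ h1 => ih h1) e)⟩

lemma bisim_approx {s t : S} (h : L.Bisim s t) (n : ℕ) : L.approx n s t := by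
  obtain ⟨r, hb, hr⟩ := h
  exact isBisimulation_approx L hb n hr

end ApproxLemmas
section POCAInfra

variable {Q A : Type} [Fintype Q] [Fintype A]

/-- The disjoint union of `S(Δ)` and `ℱ_Δ`. -/
def sumL (Δ : PPDARules Q OCSym A) : PLTS ((Q × List OCSym) ⊕ Q) A :=
  Δ.plts.sum (underlying Δ)

variable (Δ : PPDARules Q OCSym A)

lemma sum_tr_inl {c : Q × List OCSym} {a : A} {D} :
    (sumL Δ).Tr (Sum.inl c) a D ↔
      ∃ d, Δ.plts.Tr c a d ∧ D = d.map Sum.inl := by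
  constructor
  · rintro (⟨s₁, d₁, h1, h2, rfl⟩ | ⟨s₂, d₂, h1, h2, rfl⟩)
    · exact ⟨d₁, (Sum.inl.inj h1) ▸ h2, rfl⟩
    · simp at h1
  · rintro ⟨d, h, rfl⟩
    exact Or.inl ⟨c, d, rfl, h, rfl⟩

lemma sum_tr_inr {f : Q} {a : A} {D} :
    (sumL Δ).Tr (Sum.inr f) a D ↔
      ∃ d, (underlying Δ).Tr f a d ∧ D = d.map Sum.inr := by
  constructor
  · rintro (⟨s₁, d₁, h1, h2, rfl⟩ | ⟨s₂, d₂, h1, h2, rfl⟩)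
    · simp at h1
    · exact ⟨d₂, (Sum.inr.inj h1) ▸ h2, rfl⟩
  · rintro ⟨d, h, rfl⟩
    exact Or.inr ⟨f, d, rfl, h, rfl⟩

lemma pmf_map_ne_zero {S T : Type} {d : PMF S} {f : S → T} {t : T}
    (h : (d.map f) t ≠ 0) : ∃ s, d s ≠ 0 ∧ t = f s := by
  have := (PMF.mem_support_iff _ t).mpr h
  rw [PMF.support_map] at this
  obtain ⟨s, hs, rfl⟩ := this
  exact ⟨s, hs, rfl⟩

lemma pmf_map_apply_ne_zero {S T : Type} {d : PMF S} (f : S → T) {s : S}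
    (h : d s ≠ 0) : (d.map f) (f s) ≠ 0 := by
  rw [← PMF.mem_support_iff, PMF.support_map]
  exact ⟨s, (PMF.mem_support_iff _ s).mpr h, rfl⟩

lemma step_inl {c : Q × List OCSym} {y} (h : (sumL Δ).Step (Sum.inl c) y) :
    ∃ c', y = Sum.inl c' ∧ Δ.plts.Step c c' := by
  obtain ⟨a, D, hT, hne⟩ := h
  rw [sum_tr_inl] at hT
  obtain ⟨d, hTr, rfl⟩ := hT
  obtain ⟨c', hc', rfl⟩ := pmf_map_ne_zero hne
  exact ⟨c', rfl, a, d, hTr, hc'⟩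

lemma step_inr {f : Q} {y} (h : (sumL Δ).Step (Sum.inr f) y) :
    ∃ g, y = Sum.inr g := by
  obtain ⟨a, D, hT, hne⟩ := h
  rw [sum_tr_inr] at hT
  obtain ⟨d, hTr, rfl⟩ := hT
  obtain ⟨g, _, rfl⟩ := pmf_map_ne_zero hne
  exact ⟨g, rfl⟩

/-- One step from a configuration `pXᵐZ` leads to a configuration `p'Xᵐ'Z`. -/
lemma step_oconf (hwf : POCAWf Δ) {p : Q} {m : ℕ} {c'}
    (h : Δ.plts.Step (oconf p m) c') : ∃ p' m', c' = oconf p' m' := by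
  obtain ⟨a, D, hT, hne⟩ := h
  obtain ⟨q, X, β, d, hc, hrule, rfl⟩ := hT
  obtain ⟨⟨p', α⟩, hα, rfl⟩ := pmf_map_ne_zero hne
  simp only [oconf, Prod.mk.injEq] at hc
  obtain ⟨rfl, hstack⟩ := hc
  cases m with
  | zero =>
    simp only [List.replicate, List.nil_append, List.cons.injEq] at hstack
    obtain ⟨rfl, rfl⟩ := hstack
    rcases hwf.2 _ a d hrule p' α hα with rfl | rfl
    · exact ⟨p', 0, by simp [oconf]⟩
    · exact ⟨p', 1, by simp [oconf, List.replicate]⟩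
  | succ m =>
    rw [List.replicate_succ, List.cons_append, List.cons.injEq] at hstack
    obtain ⟨rfl, rfl⟩ := hstack
    rcases hwf.1 _ a d hrule p' α hα with rfl | rfl | rfl
    · exact ⟨p', m, by simp [oconf]⟩
    · exact ⟨p', m + 1, by simp [oconf, List.replicate_succ]⟩
    · exact ⟨p', m + 2, by simp [oconf, List.replicate_succ]⟩

lemma distINC_not_inc {p : Q} {m : ℕ} (h : distINC Δ (oconf p m) = ⊤) :
    ¬ InINC Δ p m := by
  intro hinc
  have hmem : (0 : ℕ∞) ∈ {n : ℕ∞ | ∃ ℓ : ℕ, n = (ℓ : ℕ∞) ∧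
      ∃ (p' : Q) (m' : ℕ), Δ.plts.StepN ℓ (oconf p m) (oconf p' m') ∧ InINC Δ p' m'} :=
    ⟨0, rfl, p, m, rfl, hinc⟩
  have := sInf_le hmem
  rw [distINC] at h
  rw [h] at this
  simp at this

lemma distINC_step {c c'} (h : distINC Δ c = ⊤) (hs : Δ.plts.Step c c') :
    distINC Δ c' = ⊤ := by
  by_contra hne
  have hnonempty : {n : ℕ∞ | ∃ ℓ : ℕ, n = (ℓ : ℕ∞) ∧
      ∃ (p' : Q) (m' : ℕ), Δ.plts.StepN ℓ c' (oconf p' m') ∧ InINC Δ p' m'}.Nonempty := by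
    by_contra hempty
    rw [Set.not_nonempty_iff_eq_empty] at hempty
    rw [distINC, hempty, sInf_empty] at hne
    exact hne rfl
  obtain ⟨x, ℓ, rfl, p', m', hstep, hinc⟩ := hnonempty
  have hmem : ((ℓ + 1 : ℕ) : ℕ∞) ∈ {n : ℕ∞ | ∃ ℓ : ℕ, n = (ℓ : ℕ∞) ∧
      ∃ (p' : Q) (m' : ℕ), Δ.plts.StepN ℓ c (oconf p' m') ∧ InINC Δ p' m'} :=
    ⟨ℓ + 1, rfl, p', m', ⟨c', hs, hstep⟩, hinc⟩
  have := sInf_le hmem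
  rw [distINC] at h
  rw [h] at this
  simp at this

/-- The "good" states: all finite states, and all configurations with
`dist = ∞`. -/
def GSet : Set ((Q × List OCSym) ⊕ Q) :=
  {x | (∃ f, x = Sum.inr f) ∨
    ∃ p m, x = Sum.inl (oconf p m) ∧ distINC Δ (oconf p m) = ⊤}

lemma anchor {x} (hx : x ∈ GSet Δ) :
    ∃ f, (sumL Δ).approx (Fintype.card Q) x (Sum.inr f) := by
  rcases hx with ⟨f, rfl⟩ | ⟨p, m, rfl, hd⟩
  · exact ⟨f, approx_refl _ _ _⟩
  · have := distINC_not_inc Δ hd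
    rw [InINC] at this
    push_neg at this
    obtain ⟨f, hf⟩ := this
    exact ⟨f, hf⟩


lemma GSet_closed (hwf : POCAWf Δ) {x y} (hx : x ∈ GSet Δ)
    (h : (sumL Δ).Step x y) : y ∈ GSet Δ := by
  rcases hx with ⟨f, rfl⟩ | ⟨p, m, rfl, hd⟩
  · obtain ⟨g, rfl⟩ := step_inr Δ h
    exact Or.inl ⟨g, rfl⟩
  · obtain ⟨c', rfl, hstep⟩ := step_inl Δ h
    obtain ⟨p', m', rfl⟩ := step_oconf Δ hwf hstep
    exact Or.inr ⟨p', m', rfl, distINC_step Δ hd hstep⟩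

end POCAInfra
section Stabilization

variable {Q A : Type} [Fintype Q] [Fintype A] (Δ : PPDARules Q OCSym A)

/-- The approximants restricted to the finite part. -/
def rQn (n : ℕ) (f g : Q) : Prop :=
  (sumL Δ).approx n (Sum.inr f) (Sum.inr g)

lemma upgrade_inr (n : ℕ) (hstab : ∀ f g, rQn Δ n f g → rQn Δ (n+1) f g)
    {e e' : PMF Q}
    (h : PLTS.REquiv ((sumL Δ).approx n) (e.map Sum.inr) (e'.map Sum.inr)) :
    PLTS.REquiv ((sumL Δ).approx (n+1)) (e.map Sum.inr) (e'.map Sum.inr) := by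
  intro s
  rw [mass_map, mass_map]
  by_cases hA : ∃ g₀, (sumL Δ).approx (n+1) s (Sum.inr g₀)
  · obtain ⟨g₀, hg₀⟩ := hA
    have hsets : (Sum.inr ⁻¹' {t | (sumL Δ).approx (n+1) s t} : Set Q)
        = Sum.inr ⁻¹' {t | (sumL Δ).approx n (Sum.inr g₀) t} := by
      ext g
      simp only [Set.mem_preimage, Set.mem_setOf_eq]
      constructor
      · intro hg
        exact approx_antitone_succ _ n (approx_trans _ (approx_symm _ hg₀) hg)
      · intro hg
        exact approx_trans _ hg₀ (hstab g₀ g hg)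
    rw [hsets, ← mass_map, ← mass_map]
    exact h (Sum.inr g₀)
  · have hempty : (Sum.inr ⁻¹' {t | (sumL Δ).approx (n+1) s t} : Set Q) = ∅ := by
      ext g
      simp only [Set.mem_preimage, Set.mem_setOf_eq, Set.mem_empty_iff_false,
        iff_false]
      exact fun hg => hA ⟨g, hg⟩
    rw [hempty, mass_empty, mass_empty]

lemma rQn_succ_step (n : ℕ) (hstab : ∀ f g, rQn Δ n f g → rQn Δ (n+1) f g) :
    ∀ f g, rQn Δ (n+1) f g → rQn Δ (n+2) f g := by
  intro f g h
  constructor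
  · intro a D hD
    obtain ⟨e, he, rfl⟩ := (sum_tr_inr Δ).mp hD
    obtain ⟨D', hD', hE⟩ := h.1 a _ hD
    obtain ⟨e', he', rfl⟩ := (sum_tr_inr Δ).mp hD'
    exact ⟨_, hD', upgrade_inr Δ n hstab hE⟩
  · intro a D hD
    obtain ⟨e, he, rfl⟩ := (sum_tr_inr Δ).mp hD
    obtain ⟨D', hD', hE⟩ := h.2 a _ hD
    obtain ⟨e', he', rfl⟩ := (sum_tr_inr Δ).mp hD'
    exact ⟨_, hD', upgrade_inr Δ n hstab hE⟩

lemma rQn_ge (n₀ : ℕ) (hstab : ∀ f g, rQn Δ n₀ f g → rQn Δ (n₀+1) f g) :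
    ∀ m, n₀ ≤ m → ∀ f g, rQn Δ m f g → rQn Δ (m+1) f g := by
  intro m hm
  induction m, hm using Nat.le_induction with
  | base => exact hstab
  | succ m hm ih => exact rQn_succ_step Δ m ih

lemma exists_stab [Nonempty Q] :
    ∃ n₀, n₀ < Fintype.card Q ∧ ∀ f g, rQn Δ n₀ f g → rQn Δ (n₀+1) f g := by
  classical
  by_contra hcon
  push_neg at hcon
  set k := Fintype.card Q with hk
  let st : ℕ → Setoid Q := fun n => ⟨rQn Δ n,
    ⟨fun _ => approx_refl _ _ _, fun h => approx_symm _ h,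
      fun h h' => approx_trans _ h h'⟩⟩
  let c : ℕ → ℕ := fun n => Fintype.card (Quotient (st n))
  have hlt : ∀ n, n < k → c n < c (n+1) := by
    intro n hn
    obtain ⟨f, g, hfg, hnfg⟩ := hcon n hn
    have φsound : ∀ a b : Q, (st (n+1)).r a b → (st n).r a b :=
      fun a b h => approx_antitone_succ _ n h
    let φ : Quotient (st (n+1)) → Quotient (st n) :=
      Quotient.lift (Quotient.mk (st n)) (fun a b h => Quotient.sound (φsound a b h))
    have hsurj : Function.Surjective φ := by
      intro x
      induction x using Quotient.ind with
      | _ a => exact ⟨Quotient.mk _ a, rfl⟩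
    have hninj : ¬ Function.Injective φ := by
      intro hinj
      have heq : Quotient.mk (st (n+1)) f = Quotient.mk (st (n+1)) g :=
        hinj (Quotient.sound hfg)
      exact hnfg (Quotient.exact heq)
    exact Fintype.card_lt_of_surjective_not_injective φ hsurj hninj
  have hmono : ∀ n, n ≤ k → c 0 + n ≤ c n := by
    intro n hn
    induction n with
    | zero => simp
    | succ n ih =>
      have h1 := ih (Nat.le_of_succ_le hn)
      have h2 := hlt n (Nat.lt_of_succ_le hn)
      omega
  have h1 : 1 ≤ c 0 := @Fintype.card_pos _ _ ⟨Quotient.mk (st 0) (Classical.arbitrary Q)⟩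
  have h2 : c k ≤ k := by
    have := Fintype.card_quotient_le (st k)
    simpa using this
  have := hmono k le_rfl
  omega

lemma rQn_card [Nonempty Q] :
    ∀ f g, rQn Δ (Fintype.card Q - 1) f g → rQn Δ (Fintype.card Q) f g := by
  obtain ⟨n₀, hn₀, hstab⟩ := exists_stab Δ
  intro f g h
  have hk : Fintype.card Q - 1 + 1 = Fintype.card Q :=
    Nat.succ_pred_eq_of_pos Fintype.card_pos
  have := rQn_ge Δ n₀ hstab (Fintype.card Q - 1) (by omega) f g h
  rwa [hk] at this

lemma key_claim [Nonempty Q] {x y} (hx : x ∈ GSet Δ) (hy : y ∈ GSet Δ)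
    (h : (sumL Δ).approx (Fintype.card Q - 1) x y) :
    (sumL Δ).approx (Fintype.card Q) x y := by
  obtain ⟨fx, hfx⟩ := anchor Δ hx
  obtain ⟨fy, hfy⟩ := anchor Δ hy
  have h1 : rQn Δ (Fintype.card Q - 1) fx fy :=
    approx_trans _ (approx_symm _ (approx_le _ (Nat.sub_le _ _) hfx))
      (approx_trans _ h (approx_le _ (Nat.sub_le _ _) hfy))
  have h2 := rQn_card Δ fx fy h1
  exact approx_trans _ hfx (approx_trans _ h2 (approx_symm _ hfy))

end Stabilization
section MainProof

variable {Q A : Type} [Fintype Q] [Fintype A] (Δ : PPDARules Q OCSym A)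

/-- The candidate bisimulation on the disjoint-union pLTS. -/
def RRel (x y : (Q × List OCSym) ⊕ Q) : Prop :=
  x = y ∨ (x ∈ GSet Δ ∧ y ∈ GSet Δ ∧ (sumL Δ).approx (Fintype.card Q) x y)

lemma RRel_equiv : Equivalence (RRel Δ) := by
  constructor
  · exact fun x => Or.inl rfl
  · rintro x y (rfl | ⟨hx, hy, h⟩)
    · exact Or.inl rfl
    · exact Or.inr ⟨hy, hx, approx_symm _ h⟩
  · rintro x y z (rfl | ⟨hx, hy, h⟩) h2
    · exact h2
    · rcases h2 with rfl | ⟨_, hz, h'⟩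
      · exact Or.inr ⟨hx, hy, h⟩
      · exact Or.inr ⟨hx, hz, approx_trans _ h h'⟩

lemma upgrade_G [Nonempty Q] {d d' : PMF ((Q × List OCSym) ⊕ Q)}
    (hd : ∀ s, d s ≠ 0 → s ∈ GSet Δ) (hd' : ∀ s, d' s ≠ 0 → s ∈ GSet Δ)
    (h : PLTS.REquiv ((sumL Δ).approx (Fintype.card Q - 1)) d d') :
    PLTS.REquiv (RRel Δ) d d' := by
  intro s
  by_cases hs : s ∈ GSet Δ
  · have hiff : ∀ u, u ∈ GSet Δ →
        (RRel Δ s u ↔ (sumL Δ).approx (Fintype.card Q - 1) s u) := by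
      intro u hu
      constructor
      · rintro (rfl | ⟨_, _, hk⟩)
        · exact approx_refl _ _ _
        · exact approx_le _ (Nat.sub_le _ _) hk
      · intro hk
        exact Or.inr ⟨hs, hu, key_claim Δ hs hu hk⟩
    calc PLTS.mass d {t | RRel Δ s t}
        = PLTS.mass d {t | (sumL Δ).approx (Fintype.card Q - 1) s t} :=
          mass_congr d (fun u hu => by
            simp only [Set.mem_setOf_eq]
            exact hiff u (hd u hu))
      _ = PLTS.mass d' {t | (sumL Δ).approx (Fintype.card Q - 1) s t} := h s
      _ = PLTS.mass d' {t | RRel Δ s t} :=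
          (mass_congr d' (fun u hu => by
            simp only [Set.mem_setOf_eq]
            exact hiff u (hd' u hu))).symm
  · have hset : {t | RRel Δ s t} = {s} := by
      ext t
      simp only [Set.mem_setOf_eq, Set.mem_singleton_iff]
      constructor
      · rintro (rfl | ⟨hsG, _, _⟩)
        · rfl
        · exact absurd hsG hs
      · rintro rfl
        exact Or.inl rfl
    rw [hset, mass_singleton, mass_singleton]
    have h1 : d s = 0 := by
      by_contra hne
      exact hs (hd s hne)
    have h2 : d' s = 0 := by
      by_contra hne
      exact hs (hd' s hne)
    rw [h1, h2]

lemma RRel_isBisim (hwf : POCAWf Δ) [Nonempty Q] :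
    (sumL Δ).IsBisimulation (RRel Δ) := by
  refine ⟨RRel_equiv Δ, ?_⟩
  rintro s t (rfl | ⟨hsG, htG, hk⟩) a d hd
  · exact ⟨d, hd, rEquiv_refl _ _⟩
  · obtain ⟨j, hj⟩ : ∃ j, Fintype.card Q = j + 1 :=
      ⟨Fintype.card Q - 1, (Nat.succ_pred_eq_of_pos Fintype.card_pos).symm⟩
    rw [hj] at hk
    obtain ⟨d', hd', he⟩ := hk.1 a d hd
    have hdG : ∀ u, d u ≠ 0 → u ∈ GSet Δ := fun u hu =>
      GSet_closed Δ hwf hsG ⟨a, d, hd, hu⟩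
    have hdG' : ∀ u, d' u ≠ 0 → u ∈ GSet Δ := fun u hu =>
      GSet_closed Δ hwf htG ⟨a, d', hd', hu⟩
    have hj' : j = Fintype.card Q - 1 := by omega
    exact ⟨d', hd', upgrade_G Δ hdG hdG' (hj' ▸ he)⟩

/-- Transfer of approximants between `S(Δ)` and the disjoint union. -/
lemma approx_inl : ∀ (n : ℕ) (c c' : Q × List OCSym),
    Δ.plts.approx n c c' ↔ (sumL Δ).approx n (Sum.inl c) (Sum.inl c') := by
  intro n
  induction n with
  | zero => exact fun c c' => iff_of_true trivial trivial
  | succ n ih =>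
    intro c c'
    have transfer : ∀ (d d' : PMF (Q × List OCSym)),
        PLTS.REquiv (Δ.plts.approx n) d d' ↔
          PLTS.REquiv ((sumL Δ).approx n) (d.map Sum.inl) (d'.map Sum.inl) := by
      intro d d'
      constructor
      · intro e s
        rw [mass_map, mass_map]
        by_cases hB : ∃ c₀, (sumL Δ).approx n s (Sum.inl c₀)
        · obtain ⟨c₀, hc₀⟩ := hB
          have hsets : (Sum.inl ⁻¹' {t | (sumL Δ).approx n s t} :
              Set (Q × List OCSym)) = {cc | Δ.plts.approx n c₀ cc} := by
            ext u
            simp only [Set.mem_preimage, Set.mem_setOf_eq]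
            rw [ih c₀ u]
            exact ⟨fun hu => approx_trans _ (approx_symm _ hc₀) hu,
              fun hu => approx_trans _ hc₀ hu⟩
          rw [hsets]
          exact e c₀
        · have hempty : (Sum.inl ⁻¹' {t | (sumL Δ).approx n s t} :
              Set (Q × List OCSym)) = ∅ := by
            ext u
            simp only [Set.mem_preimage, Set.mem_setOf_eq,
              Set.mem_empty_iff_false, iff_false]
            exact fun hu => hB ⟨u, hu⟩
          rw [hempty, mass_empty, mass_empty]
      · intro e c₀
        have hsets : {cc | Δ.plts.approx n c₀ cc} =
            Sum.inl ⁻¹' {t | (sumL Δ).approx n (Sum.inl c₀) t} := by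
          ext u
          simp only [Set.mem_preimage, Set.mem_setOf_eq]
          exact ih c₀ u
        rw [hsets, ← mass_map, ← mass_map]
        exact e (Sum.inl c₀)
    constructor
    · intro h
      constructor
      · intro a D hD
        rw [sum_tr_inl] at hD
        obtain ⟨d, hTr, rfl⟩ := hD
        obtain ⟨d', hd', e⟩ := h.1 a d hTr
        exact ⟨d'.map Sum.inl, (sum_tr_inl Δ).mpr ⟨d', hd', rfl⟩,
          (transfer d d').mp e⟩
      · intro a D hD
        rw [sum_tr_inl] at hD
        obtain ⟨d', hTr', rfl⟩ := hD
        obtain ⟨d, hd, e⟩ := h.2 a d' hTr'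
        exact ⟨d.map Sum.inl, (sum_tr_inl Δ).mpr ⟨d, hd, rfl⟩,
          (transfer d d').mp e⟩
    · intro h
      constructor
      · intro a d hTr
        obtain ⟨D', hD', e⟩ := h.1 a (d.map Sum.inl)
          ((sum_tr_inl Δ).mpr ⟨d, hTr, rfl⟩)
        rw [sum_tr_inl] at hD'
        obtain ⟨d', hTr', rfl⟩ := hD'
        exact ⟨d', hTr', (transfer d d').mpr e⟩
      · intro a d' hTr'
        obtain ⟨D, hD, e⟩ := h.2 a (d'.map Sum.inl)
          ((sum_tr_inl Δ).mpr ⟨d', hTr', rfl⟩)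
        rw [sum_tr_inl] at hD
        obtain ⟨d, hTr, rfl⟩ := hD
        exact ⟨d, hTr, (transfer d d').mpr e⟩

end MainProof

/-- For a pOCA `Δ` with `k = |Q|`: if
`dist(pXᵐZ) = dist(qXⁿZ) = ∞` then `pXᵐZ ∼ qXⁿZ` iff `pXᵐZ ∼ₖ qXⁿZ`. -/
theorem bisim_iff_approx_of_distINC_top (Q A : Type) [Fintype Q] [Fintype A]
    (Δ : PPDARules Q OCSym A) (hwf : POCAWf Δ) (p q : Q) (m n : ℕ)
    (hp : distINC Δ (oconf p m) = ⊤) (hq : distINC Δ (oconf q n) = ⊤) :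
    Δ.plts.Bisim (oconf p m) (oconf q n) ↔
      Δ.plts.approx (Fintype.card Q) (oconf p m) (oconf q n) := by
  have hne : Nonempty Q := ⟨p⟩
  constructor
  · intro h
    exact bisim_approx _ h _
  · intro h
    refine ⟨fun c c' => RRel Δ (Sum.inl c) (Sum.inl c'), ⟨?_, ?_⟩, ?_⟩
    · exact ⟨fun c => (RRel_equiv Δ).refl _,
        fun hcc => (RRel_equiv Δ).symm hcc,
        fun h1 h2 => (RRel_equiv Δ).trans h1 h2⟩
    · intro c c' hR a d hTr
      obtain ⟨D', hD', e⟩ := (RRel_isBisim Δ hwf).2 _ _ hR a (d.map Sum.inl)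
        ((sum_tr_inl Δ).mpr ⟨d, hTr, rfl⟩)
      rw [sum_tr_inl] at hD'
      obtain ⟨d', hTr', rfl⟩ := hD'
      refine ⟨d', hTr', ?_⟩
      intro c₀
      have hsets : {cc | RRel Δ (Sum.inl c₀) (Sum.inl cc)} =
          Sum.inl ⁻¹' {t | RRel Δ (Sum.inl c₀) t} := rfl
      show PLTS.mass d {cc | RRel Δ (Sum.inl c₀) (Sum.inl cc)}
        = PLTS.mass d' {cc | RRel Δ (Sum.inl c₀) (Sum.inl cc)}
      rw [hsets, ← mass_map, ← mass_map]
      exact e (Sum.inl c₀)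
    · exact Or.inr ⟨Or.inr ⟨p, m, rfl, hp⟩, Or.inr ⟨q, n, rfl, hq⟩,
        (approx_inl Δ (Fintype.card Q) _ _).mp h⟩
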